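/- Let G be a finite group, O a saturated G-transfer system, and K ≤ H subgroups of G. Then K →_O H if and only if Core_H(K) →_O H, where Core_H(K) = ⋂_{h ∈ H} hKh⁻¹ is the normal core of K in H. -/

import Mathlib

/-- A `G`-transfer system: a partial order `rel` on the set of subgroups of `G`
refining inclusion, closed under restriction and conjugation. -/
structure TransferSystem (G : Type*) [Group G] where
  rel : Subgroup G → Subgroup G → Prop
  refl : ∀ H : Subgroup G, rel H H
  trans : ∀ {K L H : Subgroup G}, rel K L → rel L H → rel K H
  le_of_rel : ∀ {K H : Subgroup G}, rel K H → K ≤ H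
  restrict : ∀ {L H K : Subgroup G}, rel L H → K ≤ H → rel (K ⊓ L) K
  conj : ∀ {K H : Subgroup G} (g : G), rel K H →
    rel (K.map (MulAut.conj g).toMonoidHom) (H.map (MulAut.conj g).toMonoidHom)

/-- A transfer system is saturated if whenever `L ≤ K ≤ H` and `L → H`, also `K → H`. -/
def TransferSystem.IsSaturated {G : Type*} [Group G] (O : TransferSystem G) : Prop :=
  ∀ L K H : Subgroup G, L ≤ K → K ≤ H → O.rel L H → O.rel K H

/-- A transfer system is disc-like (cosaturated) if it is generated by its transfers with
target `G`, i.e. it is the smallest transfer system containing `{(H, ⊤) : H →_O ⊤}`. -/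
def TransferSystem.IsDiscLike {G : Type*} [Group G] (O : TransferSystem G) : Prop :=
  ∀ O' : TransferSystem G, (∀ H : Subgroup G, O.rel H ⊤ → O'.rel H ⊤) →
    ∀ K H : Subgroup G, O.rel K H → O'.rel K H

/-- The normal core `Core_H(K) = ⋂_{h ∈ H} h K h⁻¹` of `K` in `H`. -/
def normalCoreIn {G : Type*} [Group G] (H K : Subgroup G) : Subgroup G :=
  ⨅ h ∈ H, K.map (MulAut.conj h).toMonoidHom

/-- The inflation relation on subgroups of `G` associated to a `(G/N)`-transfer system `Q`:
`M → L` iff there are `N ≤ K ≤ H` with `L ≤ H`, `M = K ⊓ L` and `K/N →_Q H/N`. -/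
def infRel {G : Type*} [Group G] (N : Subgroup G) [N.Normal] (Q : TransferSystem (G ⧸ N)) :
    Subgroup G → Subgroup G → Prop :=
  fun M L => ∃ K H : Subgroup G, N ≤ K ∧ K ≤ H ∧ L ≤ H ∧ M = K ⊓ L ∧
    Q.rel (K.map (QuotientGroup.mk' N)) (H.map (QuotientGroup.mk' N))

lemma map_conj_self {G : Type*} [Group G] (H : Subgroup G) {h : G} (hh : h ∈ H) :
    H.map (MulAut.conj h).toMonoidHom = H := by
  ext x
  simp only [Subgroup.mem_map, MulEquiv.coe_toMonoidHom, MulAut.conj_apply]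
  constructor
  · rintro ⟨y, hy, rfl⟩
    exact H.mul_mem (H.mul_mem hh hy) (H.inv_mem hh)
  · intro hx
    exact ⟨h⁻¹ * x * h, H.mul_mem (H.mul_mem (H.inv_mem hh) hx) hh, by group⟩

lemma rel_inf {G : Type*} [Group G] (O : TransferSystem G) {A B H : Subgroup G}
    (hA : O.rel A H) (hB : O.rel B H) : O.rel (A ⊓ B) H :=
  O.trans (O.restrict hB (O.le_of_rel hA)) hA

lemma rel_sInf {G : Type*} [Group G] (O : TransferSystem G) {H : Subgroup G}
    {S : Set (Subgroup G)} (hS : S.Finite) (hne : S.Nonempty)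
    (h : ∀ L ∈ S, O.rel L H) : O.rel (sInf S) H := by
  revert hne h
  refine Set.Finite.induction_on
    (motive := fun S _ => S.Nonempty → (∀ L ∈ S, O.rel L H) → O.rel (sInf S) H) S hS ?_ ?_
  · intro hne _; exact absurd hne (by simp)
  · rintro a s - - ih - h
    rcases s.eq_empty_or_nonempty with rfl | hsne
    · simpa using h a (by simp)
    · rw [sInf_insert]
      exact rel_inf O (h a (by simp)) (ih hsne fun L hL => h L (Set.mem_insert_of_mem _ hL))

/-- For a saturated transfer system and `K ≤ H`,
`K →_O H` if and only if `Core_H(K) →_O H`. -/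
theorem stmt6 {G : Type*} [Group G] [Finite G] (O : TransferSystem G)
    (hO : O.IsSaturated) (K H : Subgroup G) (hKH : K ≤ H) :
    O.rel K H ↔ O.rel (normalCoreIn H K) H := by
  constructor
  · intro h
    have : normalCoreIn H K =
        sInf ((fun h => K.map (MulAut.conj h).toMonoidHom) '' (H : Set G)) := by
      rw [sInf_image]; rfl
    rw [this]
    refine rel_sInf O (Set.Finite.image _ (Set.toFinite _))
      ⟨K, 1, H.one_mem, map_conj_self K K.one_mem⟩ ?_
    rintro L ⟨g, hg, rfl⟩
    have := O.conj g h
    rwa [map_conj_self H hg] at this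
  · intro h
    refine hO _ K H ?_ hKH h
    calc normalCoreIn H K ≤ K.map (MulAut.conj (1 : G)).toMonoidHom :=
          biInf_le _ H.one_mem
      _ = K := map_conj_self K K.one_mem
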